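/- Let L and A be n×n real matrices with L symmetric positive definite and A symmetric. Then the matrix L * A has only real eigenvalues: its characteristic polynomial over ℝ has exactly n roots counted with multiplicity. Moreover, the number of positive roots, the number of zero roots, and the number of negative roots of the characteristic polynomial of L * A, each counted with multiplicity, equal respectively the number of positive, zero and negative roots (counted with multiplicity) of the characteristic polynomial of A. -/

import Mathlib

open Matrix

open Polynomial Module

variable {n : ℕ}

lemma my_charpoly_conj (P M : Matrix (Fin n) (Fin n) ℝ) (hP : IsUnit P.det) :
    (P * M * P⁻¹).charpoly = M.charpoly := by
  have hmap : (C : ℝ →+* ℝ[X]).mapMatrix P⁻¹ * (C : ℝ →+* ℝ[X]).mapMatrix P = 1 := by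
    rw [← _root_.map_mul, nonsing_inv_mul P hP, _root_.map_one]
  have hmap' : (C : ℝ →+* ℝ[X]).mapMatrix P * (C : ℝ →+* ℝ[X]).mapMatrix P⁻¹ = 1 := by
    rw [← _root_.map_mul, mul_nonsing_inv P hP, _root_.map_one]
  have key : charmatrix (P * M * P⁻¹) =
      (C : ℝ →+* ℝ[X]).mapMatrix P * charmatrix M * (C : ℝ →+* ℝ[X]).mapMatrix P⁻¹ := by
    rw [charmatrix, charmatrix, Matrix.mul_sub, Matrix.sub_mul]
    congr 1
    · rw [(scalar_commute (X : ℝ[X]) (Commute.all _) _).symm.eq, mul_assoc, hmap', mul_one]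
    · rw [← _root_.map_mul, ← _root_.map_mul]
  rw [Matrix.charpoly, Matrix.charpoly, key, det_mul, det_mul]
  rw [mul_comm ((((C : ℝ →+* ℝ[X]).mapMatrix P).det) * _), ← mul_assoc, ← det_mul, hmap,
    det_one, one_mul]

lemma my_charpoly_diagonal (d : Fin n → ℝ) :
    (Matrix.diagonal d).charpoly = ∏ i, (X - C (d i)) := by
  have h : charmatrix (Matrix.diagonal d) = Matrix.diagonal (fun i => X - C (d i)) := by
    ext i j
    by_cases h : i = j
    · subst h; simp
    · simp [h, Matrix.diagonal_apply_ne _ h]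
  rw [Matrix.charpoly, h, det_diagonal]

lemma my_charpoly_isHermitian {M : Matrix (Fin n) (Fin n) ℝ} (hM : M.IsHermitian) :
    M.charpoly.roots = Finset.univ.val.map hM.eigenvalues := by
  set U : Matrix (Fin n) (Fin n) ℝ := (hM.eigenvectorUnitary : Matrix (Fin n) (Fin n) ℝ) with hU
  have hUmem : U ∈ Matrix.unitaryGroup (Fin n) ℝ := hM.eigenvectorUnitary.2
  have hU1 : U * star U = 1 := (Matrix.mem_unitaryGroup_iff).mp hUmem
  have hUdet : IsUnit U.det := by
    apply IsUnit.of_mul_eq_one (star U).det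
    rw [← det_mul, hU1, det_one]
  have hUinv : U⁻¹ = star U := inv_eq_right_inv hU1
  have hdiag : diagonal (RCLike.ofReal ∘ hM.eigenvalues) = diagonal hM.eigenvalues := by
    congr 1
  have hst : M = U * diagonal hM.eigenvalues * U⁻¹ := by
    rw [hUinv, ← hdiag]; exact hM.spectral_theorem
  conv_lhs => rw [hst]
  rw [my_charpoly_conj U _ hUdet, my_charpoly_diagonal]
  have : ∏ i, (X - C (hM.eigenvalues i)) =
      (Finset.univ.val.map hM.eigenvalues |>.map fun a => X - C a).prod := by
    rw [Multiset.map_map]; rfl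
  rw [this, Polynomial.roots_multiset_prod_X_sub_C]

section eig
variable {M : Matrix (Fin n) (Fin n) ℝ} (hM : M.IsHermitian)

noncomputable def evec (hM : M.IsHermitian) (i : Fin n) : Fin n → ℝ :=
  ⇑(hM.eigenvectorBasis i)

lemma my_sum_dotProduct {ι : Type} [Fintype ι] (f : ι → (Fin n → ℝ)) (w : Fin n → ℝ) :
    (∑ i, f i) ⬝ᵥ w = ∑ i, f i ⬝ᵥ w := by
  simp only [dotProduct, Finset.sum_apply, Finset.sum_mul]
  exact Finset.sum_comm

lemma evec_dot (i j : Fin n) :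
    evec hM i ⬝ᵥ evec hM j = if i = j then 1 else 0 := by
  have h := orthonormal_iff_ite.mp hM.eigenvectorBasis.orthonormal i j
  rw [← h]
  simp [evec, dotProduct, PiLp.inner_apply, RCLike.inner_apply, mul_comm]

lemma evec_mulVec (i : Fin n) :
    M.mulVec (evec hM i) = hM.eigenvalues i • evec hM i :=
  hM.mulVec_eigenvectorBasis i

lemma sum_evec_dot {ι : Type} [Fintype ι] [DecidableEq ι] (f : ι → Fin n) (hf : Function.Injective f)
    (c : ι → ℝ) (j : ι) :
    (∑ i, c i • evec hM (f i)) ⬝ᵥ evec hM (f j) = c j := by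
  rw [my_sum_dotProduct]
  rw [Finset.sum_eq_single j]
  · rw [smul_dotProduct, evec_dot, if_pos rfl]; simp
  · intro i _ hij
    rw [smul_dotProduct, evec_dot, if_neg (fun h => hij (hf h))]; simp
  · intro h; exact absurd (Finset.mem_univ j) h

lemma quad_sum_evec {ι : Type} [Fintype ι] [DecidableEq ι] (f : ι → Fin n) (hf : Function.Injective f)
    (c : ι → ℝ) :
    M.mulVec (∑ i, c i • evec hM (f i)) ⬝ᵥ (∑ i, c i • evec hM (f i)) =
      ∑ i, hM.eigenvalues (f i) * c i ^ 2 := by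
  have hmv : M.mulVec (∑ i, c i • evec hM (f i)) =
      ∑ i, (hM.eigenvalues (f i) * c i) • evec hM (f i) := by
    rw [show M.mulVec (∑ i, c i • evec hM (f i)) =
        M.mulVecLin (∑ i, c i • evec hM (f i)) from rfl, map_sum]
    refine Finset.sum_congr rfl fun i _ => ?_
    rw [_root_.map_smul, show M.mulVecLin (evec hM (f i)) = M.mulVec (evec hM (f i)) from rfl,
      evec_mulVec, smul_smul, mul_comm]
  rw [hmv, my_sum_dotProduct]
  refine Finset.sum_congr rfl fun i _ => ?_
  rw [smul_dotProduct, dotProduct_comm, sum_evec_dot hM f hf c i,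
    smul_eq_mul]
  ring

lemma linind_evec {ι : Type} [Fintype ι] [DecidableEq ι] (f : ι → Fin n) (hf : Function.Injective f) :
    LinearIndependent ℝ (fun i => evec hM (f i)) := by
  rw [Fintype.linearIndependent_iff]
  intro c hc j
  have := sum_evec_dot hM f hf c j
  rw [hc, zero_dotProduct] at this
  exact this.symm

end eig

section bounds
variable {M : Matrix (Fin n) (Fin n) ℝ} (hM : M.IsHermitian)

lemma posdim_bound (p : Fin n → Prop) [DecidablePred p]
    (hsign : ∀ i, ¬ p i → hM.eigenvalues i ≤ 0)
    (W : Submodule ℝ (Fin n → ℝ))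
    (hW : ∀ v ∈ W, v ≠ 0 → 0 < M.mulVec v ⬝ᵥ v) :
    finrank ℝ W ≤ Fintype.card {i // p i} := by
  classical
  set N : Submodule ℝ (Fin n → ℝ) :=
    Submodule.span ℝ (Set.range fun i : {i // ¬ p i} => evec hM i.1) with hN
  have hNrank : finrank ℝ N = Fintype.card {i // ¬ p i} :=
    finrank_span_eq_card (linind_evec hM _ Subtype.val_injective)
  have hNle : ∀ v ∈ N, M.mulVec v ⬝ᵥ v ≤ 0 := by
    intro v hv
    obtain ⟨c, rfl⟩ := (Submodule.mem_span_range_iff_exists_fun ℝ).mp hv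
    rw [quad_sum_evec hM _ Subtype.val_injective c]
    apply Finset.sum_nonpos
    intro i _
    exact mul_nonpos_of_nonpos_of_nonneg (hsign i.1 i.2) (sq_nonneg _)
  have hdisj : W ⊓ N = ⊥ := by
    rw [Submodule.eq_bot_iff]
    intro v hv
    by_contra hne
    exact absurd (hW v hv.1 hne) (not_lt.2 (hNle v hv.2))
  have hsum := Submodule.finrank_sup_add_finrank_inf_eq W N
  rw [hdisj, finrank_bot, add_zero] at hsum
  have h1 : finrank ℝ ↥(W ⊔ N) ≤ n := by
    have := Submodule.finrank_le (W ⊔ N)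
    simpa using this
  have h2 : Fintype.card {i // ¬ p i} = n - Fintype.card {i // p i} := by
    have := Fintype.card_subtype_compl p
    simpa using this
  have h3 : Fintype.card {i // p i} ≤ n := by
    have := Fintype.card_subtype_le p
    simpa using this
  omega

lemma exists_posdim (p : Fin n → Prop) [DecidablePred p]
    (hsign : ∀ i, p i → 0 < hM.eigenvalues i) :
    ∃ W : Submodule ℝ (Fin n → ℝ), finrank ℝ W = Fintype.card {i // p i} ∧
      ∀ v ∈ W, v ≠ 0 → 0 < M.mulVec v ⬝ᵥ v := by
  classical
  refine ⟨Submodule.span ℝ (Set.range fun i : {i // p i} => evec hM i.1),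
    finrank_span_eq_card (linind_evec hM _ Subtype.val_injective), ?_⟩
  intro v hv hne
  obtain ⟨c, rfl⟩ := (Submodule.mem_span_range_iff_exists_fun ℝ).mp hv
  have hc : c ≠ 0 := by
    rintro rfl; simp at hne
  obtain ⟨j, hj⟩ := Function.ne_iff.mp hc
  rw [quad_sum_evec hM _ Subtype.val_injective c]
  refine Finset.sum_pos' (fun i _ => ?_) ⟨j, Finset.mem_univ j, ?_⟩
  · exact mul_nonneg (hsign i.1 i.2).le (sq_nonneg _)
  · exact mul_pos (hsign j.1 j.2) (sq_pos_of_ne_zero hj)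

lemma negdim_bound (p : Fin n → Prop) [DecidablePred p]
    (hsign : ∀ i, ¬ p i → 0 ≤ hM.eigenvalues i)
    (W : Submodule ℝ (Fin n → ℝ))
    (hW : ∀ v ∈ W, v ≠ 0 → M.mulVec v ⬝ᵥ v < 0) :
    finrank ℝ W ≤ Fintype.card {i // p i} := by
  classical
  set N : Submodule ℝ (Fin n → ℝ) :=
    Submodule.span ℝ (Set.range fun i : {i // ¬ p i} => evec hM i.1) with hN
  have hNrank : finrank ℝ N = Fintype.card {i // ¬ p i} :=
    finrank_span_eq_card (linind_evec hM _ Subtype.val_injective)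
  have hNle : ∀ v ∈ N, 0 ≤ M.mulVec v ⬝ᵥ v := by
    intro v hv
    obtain ⟨c, rfl⟩ := (Submodule.mem_span_range_iff_exists_fun ℝ).mp hv
    rw [quad_sum_evec hM _ Subtype.val_injective c]
    exact Finset.sum_nonneg fun i _ => mul_nonneg (hsign i.1 i.2) (sq_nonneg _)
  have hdisj : W ⊓ N = ⊥ := by
    rw [Submodule.eq_bot_iff]
    intro v hv
    by_contra hne
    exact absurd (hW v hv.1 hne) (not_lt.2 (hNle v hv.2))
  have hsum := Submodule.finrank_sup_add_finrank_inf_eq W N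
  rw [hdisj, finrank_bot, add_zero] at hsum
  have h1 : finrank ℝ ↥(W ⊔ N) ≤ n := by
    have := Submodule.finrank_le (W ⊔ N)
    simpa using this
  have h2 : Fintype.card {i // ¬ p i} = n - Fintype.card {i // p i} := by
    have := Fintype.card_subtype_compl p
    simpa using this
  have h3 : Fintype.card {i // p i} ≤ n := by
    have := Fintype.card_subtype_le p
    simpa using this
  omega

lemma exists_negdim (p : Fin n → Prop) [DecidablePred p]
    (hsign : ∀ i, p i → hM.eigenvalues i < 0) :
    ∃ W : Submodule ℝ (Fin n → ℝ), finrank ℝ W = Fintype.card {i // p i} ∧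
      ∀ v ∈ W, v ≠ 0 → M.mulVec v ⬝ᵥ v < 0 := by
  classical
  refine ⟨Submodule.span ℝ (Set.range fun i : {i // p i} => evec hM i.1),
    finrank_span_eq_card (linind_evec hM _ Subtype.val_injective), ?_⟩
  intro v hv hne
  obtain ⟨c, rfl⟩ := (Submodule.mem_span_range_iff_exists_fun ℝ).mp hv
  have hc : c ≠ 0 := by
    rintro rfl; simp at hne
  obtain ⟨j, hj⟩ := Function.ne_iff.mp hc
  rw [quad_sum_evec hM _ Subtype.val_injective c]
  have : 0 < ∑ i, -(hM.eigenvalues i.1 * c i ^ 2) := by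
    refine Finset.sum_pos' (fun i _ => ?_) ⟨j, Finset.mem_univ j, ?_⟩
    · simp only [Left.nonneg_neg_iff]
      exact mul_nonpos_of_nonpos_of_nonneg (hsign i.1 i.2).le (sq_nonneg _)
    · simp only [neg_pos]
      exact mul_neg_of_neg_of_pos (hsign j.1 j.2) (sq_pos_of_ne_zero hj)
  rw [Finset.sum_neg_distrib] at this
  linarith

end bounds

lemma quad_congr (A S : Matrix (Fin n) (Fin n) ℝ) (w : Fin n → ℝ) :
    A.mulVec (S.mulVec w) ⬝ᵥ (S.mulVec w) = (Sᵀ * A * S).mulVec w ⬝ᵥ w := by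
  rw [mulVec_mulVec, dotProduct_mulVec, ← transpose_transpose S, vecMul_transpose,
    transpose_transpose, mulVec_mulVec, ← mul_assoc]

lemma congr_count_pos {A B S : Matrix (Fin n) (Fin n) ℝ} (hA : A.IsHermitian)
    (hB : B.IsHermitian) (hS : IsUnit S.det) (hBS : B = Sᵀ * A * S) :
    Fintype.card {i // 0 < hB.eigenvalues i} ≤ Fintype.card {i // 0 < hA.eigenvalues i} := by
  classical
  obtain ⟨W, hrank, hpos⟩ := exists_posdim hB (fun i => 0 < hB.eigenvalues i) (fun i h => h)
  let e : (Fin n → ℝ) ≃ₗ[ℝ] (Fin n → ℝ) :=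
    LinearEquiv.ofLinear (mulVecLin S) (mulVecLin S⁻¹)
      (by rw [← mulVecLin_mul, mul_nonsing_inv S hS, mulVecLin_one])
      (by rw [← mulVecLin_mul, nonsing_inv_mul S hS, mulVecLin_one])
  rw [← hrank, ← LinearEquiv.finrank_map_eq e W]
  refine posdim_bound hA (fun i => 0 < hA.eigenvalues i) (fun i h => not_lt.1 h) _ ?_
  rintro v hv hne
  obtain ⟨w, hw, rfl⟩ := Submodule.mem_map.mp hv
  have hwne : w ≠ 0 := by
    rintro rfl; exact hne (map_zero _)
  have : e.toLinearMap w = S.mulVec w := rfl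
  rw [this, quad_congr, ← hBS]
  exact hpos w hw hwne

lemma congr_count_neg {A B S : Matrix (Fin n) (Fin n) ℝ} (hA : A.IsHermitian)
    (hB : B.IsHermitian) (hS : IsUnit S.det) (hBS : B = Sᵀ * A * S) :
    Fintype.card {i // hB.eigenvalues i < 0} ≤ Fintype.card {i // hA.eigenvalues i < 0} := by
  classical
  obtain ⟨W, hrank, hpos⟩ := exists_negdim hB (fun i => hB.eigenvalues i < 0) (fun i h => h)
  let e : (Fin n → ℝ) ≃ₗ[ℝ] (Fin n → ℝ) :=
    LinearEquiv.ofLinear (mulVecLin S) (mulVecLin S⁻¹)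
      (by rw [← mulVecLin_mul, mul_nonsing_inv S hS, mulVecLin_one])
      (by rw [← mulVecLin_mul, nonsing_inv_mul S hS, mulVecLin_one])
  rw [← hrank, ← LinearEquiv.finrank_map_eq e W]
  refine negdim_bound hA (fun i => hA.eigenvalues i < 0) (fun i h => not_lt.1 h) _ ?_
  rintro v hv hne
  obtain ⟨w, hw, rfl⟩ := Submodule.mem_map.mp hv
  have hwne : w ≠ 0 := by
    rintro rfl; exact hne (map_zero _)
  have : e.toLinearMap w = S.mulVec w := rfl
  rw [this, quad_congr, ← hBS]
  exact hpos w hw hwne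

lemma congr_reverse {A B S : Matrix (Fin n) (Fin n) ℝ} (hS : IsUnit S.det)
    (hBS : B = Sᵀ * A * S) : A = (S⁻¹)ᵀ * B * S⁻¹ := by
  subst hBS
  have h1 : (S⁻¹)ᵀ * Sᵀ = 1 := by rw [← transpose_mul, mul_nonsing_inv S hS, transpose_one]
  symm
  calc (S⁻¹)ᵀ * (Sᵀ * A * S) * S⁻¹
      = ((S⁻¹)ᵀ * Sᵀ) * A * (S * S⁻¹) := by noncomm_ring
    _ = A := by rw [h1, mul_nonsing_inv S hS, one_mul, mul_one]

lemma count_filter_roots {M : Matrix (Fin n) (Fin n) ℝ} (hM : M.IsHermitian)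
    (p : ℝ → Prop) [DecidablePred p] :
    Multiset.card (M.charpoly.roots.filter p) =
      Fintype.card {i // p (hM.eigenvalues i)} := by
  classical
  rw [my_charpoly_isHermitian hM, ← Multiset.countP_eq_card_filter, Multiset.countP_map,
    Fintype.card_subtype]
  rfl

lemma tri_count (s : Multiset ℝ) :
    Multiset.card (s.filter fun x => 0 < x) + Multiset.card (s.filter fun x => x = 0) +
      Multiset.card (s.filter fun x => x < 0) = Multiset.card s := by
  induction s using Multiset.induction with
  | empty => simp
  | cons a t ih =>
    rcases lt_trichotomy a 0 with h | h | h
    · simp only [Multiset.filter_cons, if_pos h, if_neg (not_lt.2 h.le), if_neg h.ne,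
        Multiset.card_add, Multiset.card_cons, Multiset.card_singleton,
        Multiset.card_zero]
      omega
    · subst h
      simp only [Multiset.filter_cons, lt_irrefl, if_false, if_true, if_pos rfl,
        Multiset.card_add, Multiset.card_cons, Multiset.card_singleton,
        Multiset.card_zero]
      omega
    · simp only [Multiset.filter_cons, if_pos h, if_neg (not_lt.2 h.le), if_neg h.ne',
        Multiset.card_add, Multiset.card_cons, Multiset.card_singleton,
        Multiset.card_zero]
      omega

section mysqrt
open scoped MatrixOrder

noncomputable def mySqrt (L : Matrix (Fin n) (Fin n) ℝ) : Matrix (Fin n) (Fin n) ℝ := CFC.sqrt L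

lemma mySqrt_herm {L : Matrix (Fin n) (Fin n) ℝ} (h : L.PosSemidef) : (mySqrt L).IsHermitian :=
  (CFC.sqrt_nonneg L).posSemidef.1

lemma mySqrt_mul_self {L : Matrix (Fin n) (Fin n) ℝ} (h : L.PosSemidef) :
    mySqrt L * mySqrt L = L :=
  CFC.sqrt_mul_sqrt_self L h.nonneg

end mysqrt

/-- **Sylvester-type inertia result.**  If `L` is symmetric positive definite and `A` is
symmetric, then the characteristic polynomial of `L * A` has exactly `n` real roots counted
with multiplicity, and the numbers of positive, zero and negative roots (with multiplicity)
agree with those of the characteristic polynomial of `A`. -/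
theorem inertia_of_posdef_mul_symmetric {n : ℕ} (L A : Matrix (Fin n) (Fin n) ℝ)
    (hLsymm : Lᵀ = L)
    (hLpos : ∀ v : Fin n → ℝ, v ≠ 0 → 0 < L.mulVec v ⬝ᵥ v)
    (hAsymm : Aᵀ = A) :
    Multiset.card (L * A).charpoly.roots = n ∧
    Multiset.card ((L * A).charpoly.roots.filter fun x => 0 < x) =
      Multiset.card (A.charpoly.roots.filter fun x => 0 < x) ∧
    Multiset.card ((L * A).charpoly.roots.filter fun x => x = 0) =
      Multiset.card (A.charpoly.roots.filter fun x => x = 0) ∧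
    Multiset.card ((L * A).charpoly.roots.filter fun x => x < 0) =
      Multiset.card (A.charpoly.roots.filter fun x => x < 0) := by
  classical
  have hA : A.IsHermitian := by
    rw [Matrix.IsHermitian, conjTranspose_eq_transpose_of_trivial, hAsymm]
  have hLh : L.IsHermitian := by
    rw [Matrix.IsHermitian, conjTranspose_eq_transpose_of_trivial, hLsymm]
  have hLpd : L.PosDef := by
    refine Matrix.PosDef.of_dotProduct_mulVec_pos hLh fun x hx => ?_
    simpa [dotProduct_comm] using hLpos x hx
  set S := mySqrt L with hSdef
  have hSherm : S.IsHermitian := mySqrt_herm hLpd.posSemidef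
  have hSS : S * S = L := mySqrt_mul_self hLpd.posSemidef
  have hdet : IsUnit S.det := by
    rw [isUnit_iff_ne_zero]
    intro h
    have hLdet : L.det ≠ 0 := ne_of_gt hLpd.det_pos
    apply hLdet
    rw [← hSS, det_mul, h, mul_zero]
  have hdetne : S.det ≠ 0 := by rwa [isUnit_iff_ne_zero] at hdet
  have hdet' : IsUnit (S⁻¹).det := by
    rw [det_nonsing_inv, isUnit_iff_ne_zero, Ring.inverse_eq_inv']
    exact inv_ne_zero hdetne
  set B := S * A * S with hBdef
  have hB : B.IsHermitian := by
    rw [Matrix.IsHermitian, hBdef, conjTranspose_mul, conjTranspose_mul,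
      hSherm.eq, hA.eq, mul_assoc]
  have hST : Sᵀ = S := by
    have := hSherm.eq
    rwa [conjTranspose_eq_transpose_of_trivial] at this
  have hBS : B = Sᵀ * A * S := by rw [hST]
  have hchar : (L * A).charpoly = B.charpoly := by
    have h1 : S⁻¹ * (L * A) * (S⁻¹)⁻¹ = B := by
      rw [nonsing_inv_nonsing_inv S hdet, ← hSS, hBdef]
      calc S⁻¹ * (S * S * A) * S = (S⁻¹ * S) * (S * A * S) := by noncomm_ring
        _ = S * A * S := by rw [nonsing_inv_mul S hdet, one_mul]
    rw [← h1, my_charpoly_conj _ _ hdet']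
  have hAS : A = (S⁻¹)ᵀ * B * S⁻¹ := congr_reverse hdet hBS
  have hposeq : Fintype.card {i // 0 < hB.eigenvalues i} =
      Fintype.card {i // 0 < hA.eigenvalues i} :=
    le_antisymm (congr_count_pos hA hB hdet hBS) (congr_count_pos hB hA hdet' hAS)
  have hnegeq : Fintype.card {i // hB.eigenvalues i < 0} =
      Fintype.card {i // hA.eigenvalues i < 0} :=
    le_antisymm (congr_count_neg hA hB hdet hBS) (congr_count_neg hB hA hdet' hAS)
  have hcardB : Multiset.card (L * A).charpoly.roots = n := by
    rw [hchar, my_charpoly_isHermitian hB]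
    simp
  have hcardA : Multiset.card A.charpoly.roots = n := by
    rw [my_charpoly_isHermitian hA]
    simp
  have hposB : Multiset.card ((L * A).charpoly.roots.filter fun x => 0 < x) =
      Multiset.card (A.charpoly.roots.filter fun x => 0 < x) := by
    rw [hchar, count_filter_roots hB (fun x => 0 < x),
      count_filter_roots hA (fun x => 0 < x)]
    exact hposeq
  have hnegB : Multiset.card ((L * A).charpoly.roots.filter fun x => x < 0) =
      Multiset.card (A.charpoly.roots.filter fun x => x < 0) := by
    rw [hchar, count_filter_roots hB (fun x => x < 0),
      count_filter_roots hA (fun x => x < 0)]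
    exact hnegeq
  have htriB := tri_count (L * A).charpoly.roots
  have htriA := tri_count A.charpoly.roots
  refine ⟨hcardB, hposB, ?_, hnegB⟩
  omega
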